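/- Lower bound by a tent function: let p be an even positive integer, τ > 0, and h : [0,τ] → ℝ absolutely continuous with h(0) = h(τ) = 0, |h'| ≤ 1 a.e., and β = ‖h‖_∞. Then ∫₀^τ h(t)^p dt ≥ (2/(p+1)) β^{p+1}. -/
import Mathlib


open MeasureTheory

/-- lower bound by a tent function: if `p` is even and positive,
`h` is `1`-Lipschitz on `[0,τ]` (i.e. absolutely continuous with `|h'| ≤ 1`
a.e.), `h(0) = h(τ) = 0`, and `β = ‖h‖_∞`, then
`∫₀^τ h^p ≥ (2/(p+1))β^{p+1}`. -/
theorem tent_function_lower_bound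
    (p : ℕ) (hpe : Even p) (hp : 0 < p) (τ : ℝ) (hτ : 0 < τ)
    (h : ℝ → ℝ) (hlip : LipschitzOnWith 1 h (Set.Icc 0 τ))
    (h0 : h 0 = 0) (hτ0 : h τ = 0)
    (β : ℝ) (hβ : IsGreatest ((fun t => |h t|) '' Set.Icc 0 τ) β) :
    2 / ((p : ℝ) + 1) * β ^ (p + 1) ≤ ∫ t in (0:ℝ)..τ, h t ^ p := by
  obtain ⟨⟨t₀, ht₀mem, ht₀⟩, hub⟩ := hβ
  simp only at ht₀
  obtain ⟨ht₀0, ht₀τ⟩ := ht₀mem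
  have hβ0 : 0 ≤ β := ht₀ ▸ abs_nonneg _
  have hp1 : (0:ℝ) < (p:ℝ) + 1 := by positivity
  -- t₀ ≥ β and τ - t₀ ≥ β
  have hd1 : β ≤ t₀ := by
    have := hlip.dist_le_mul t₀ ⟨ht₀0, ht₀τ⟩ 0 ⟨le_refl 0, le_of_lt hτ⟩
    simp [Real.dist_eq, h0, abs_of_nonneg ht₀0] at this
    rwa [ht₀] at this
  have hd2 : t₀ + β ≤ τ := by
    have := hlip.dist_le_mul t₀ ⟨ht₀0, ht₀τ⟩ τ ⟨le_of_lt hτ, le_refl τ⟩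
    simp [Real.dist_eq, hτ0, abs_of_nonpos (sub_nonpos.2 ht₀τ)] at this
    rw [ht₀] at this; linarith
  -- nonnegativity of h^p
  have hpow_nonneg : ∀ t : ℝ, 0 ≤ h t ^ p := fun t => hpe.pow_nonneg _
  have hcont : ContinuousOn (fun t => h t ^ p) (Set.Icc 0 τ) :=
    (hlip.continuousOn).pow p
  have hInt : ∀ a b : ℝ, 0 ≤ a → b ≤ τ → a ≤ b →
      IntervalIntegrable (fun t => h t ^ p) volume a b := fun a b ha hb hab =>
    (hcont.mono (Set.Icc_subset_Icc ha hb)).intervalIntegrable_of_Icc hab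
  -- pointwise bound on [t₀-β, t₀+β]
  have hpt : ∀ t ∈ Set.Icc (t₀ - β) (t₀ + β), (β - |t - t₀|) ^ p ≤ h t ^ p := by
    intro t ⟨h1, h2⟩
    have htmem : t ∈ Set.Icc 0 τ := ⟨by linarith, by linarith⟩
    have hdist := hlip.dist_le_mul t htmem t₀ ⟨ht₀0, ht₀τ⟩
    simp only [Real.dist_eq, NNReal.coe_one, one_mul] at hdist
    have : β - |t - t₀| ≤ |h t| := by
      have := abs_sub_abs_le_abs_sub (h t₀) (h t)
      rw [ht₀] at this
      have h3 : |h t₀ - h t| ≤ |t - t₀| := by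
        rw [abs_sub_comm]; exact hdist
      linarith
    calc (β - |t - t₀|) ^ p ≤ |h t| ^ p := by
          apply pow_le_pow_left₀ _ this
          · have : |t - t₀| ≤ β := abs_sub_le_iff.2 ⟨by linarith, by linarith⟩
            linarith
      _ = h t ^ p := by rw [← abs_pow, abs_of_nonneg (hpow_nonneg t)]
  -- compute the tent integral
  have hab1 : t₀ - β ≤ t₀ := by linarith
  have hab2 : t₀ ≤ t₀ + β := by linarith
  have htentL : (∫ t in (t₀ - β)..t₀, (β - |t - t₀|) ^ p) = β ^ (p+1) / ((p:ℝ)+1) := by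
    have : ∀ t ∈ Set.uIcc (t₀ - β) t₀, (β - |t - t₀|) ^ p = (t - (t₀ - β)) ^ p := by
      intro t ht
      rw [Set.uIcc_of_le hab1] at ht
      rw [abs_of_nonpos (by linarith [ht.2])]
      ring_nf
    rw [intervalIntegral.integral_congr this,
        intervalIntegral.integral_comp_sub_right (fun x => x ^ p) (t₀ - β),
        integral_pow]
    simp
  have htentR : (∫ t in t₀..(t₀ + β), (β - |t - t₀|) ^ p) = β ^ (p+1) / ((p:ℝ)+1) := by
    have : ∀ t ∈ Set.uIcc t₀ (t₀ + β), (β - |t - t₀|) ^ p = (t - (t₀ + β)) ^ p := by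
      intro t ht
      rw [Set.uIcc_of_le hab2] at ht
      rw [abs_of_nonneg (by linarith [ht.1]), ← hpe.neg_pow (β - (t - t₀))]
      congr 1
      ring
    rw [intervalIntegral.integral_congr this,
        intervalIntegral.integral_comp_sub_right (fun x => x ^ p) (t₀ + β),
        integral_pow]
    simp only [sub_self, add_sub_cancel_left]
    rw [zero_pow (by omega), show t₀ - (t₀ + β) = -β by ring, (hpe.add_one).neg_pow]
    ring
  -- tent integrability
  have htentInt : ∀ a b : ℝ, IntervalIntegrable (fun t => (β - |t - t₀|) ^ p) volume a b :=
    fun a b => ((continuous_const.sub (continuous_abs.comp (continuous_sub_right t₀))).pow p).intervalIntegrable a b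
  -- compare on the middle interval
  have hmid : β ^ (p+1) / ((p:ℝ)+1) * 2 ≤ ∫ t in (t₀ - β)..(t₀ + β), h t ^ p := by
    have hle : (∫ t in (t₀ - β)..(t₀ + β), (β - |t - t₀|) ^ p)
        ≤ ∫ t in (t₀ - β)..(t₀ + β), h t ^ p := by
      apply intervalIntegral.integral_mono_on (by linarith) (htentInt _ _)
        (hInt _ _ (by linarith) (by linarith) (by linarith))
      exact hpt
    have hsplit : (∫ t in (t₀ - β)..(t₀ + β), (β - |t - t₀|) ^ p)
        = (∫ t in (t₀ - β)..t₀, (β - |t - t₀|) ^ p) + ∫ t in t₀..(t₀ + β), (β - |t - t₀|) ^ p :=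
      (intervalIntegral.integral_add_adjacent_intervals (htentInt _ _) (htentInt _ _)).symm
    rw [hsplit, htentL, htentR] at hle
    linarith
  -- assemble
  have hsplit : (∫ t in (0:ℝ)..τ, h t ^ p)
      = (∫ t in (0:ℝ)..(t₀ - β), h t ^ p) + (∫ t in (t₀ - β)..(t₀ + β), h t ^ p)
        + ∫ t in (t₀ + β)..τ, h t ^ p := by
    rw [intervalIntegral.integral_add_adjacent_intervals
        (hInt _ _ le_rfl (by linarith) (by linarith))
        (hInt _ _ (by linarith) (by linarith) (by linarith)),
      intervalIntegral.integral_add_adjacent_intervals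
        (hInt _ _ le_rfl (by linarith) (by linarith))
        (hInt _ _ (by linarith) le_rfl (by linarith))]
  have hpos1 : 0 ≤ ∫ t in (0:ℝ)..(t₀ - β), h t ^ p :=
    intervalIntegral.integral_nonneg (by linarith) (fun t _ => hpow_nonneg t)
  have hpos2 : 0 ≤ ∫ t in (t₀ + β)..τ, h t ^ p :=
    intervalIntegral.integral_nonneg (by linarith) (fun t _ => hpow_nonneg t)
  rw [hsplit]
  have : 2 / ((p:ℝ) + 1) * β ^ (p + 1) = β ^ (p+1) / ((p:ℝ)+1) * 2 := by ring
  linarith [hmid]
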